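/- Any two distinct points of the grid G_η (the radial projection to S^n of the uniform grid of mesh η on the cube C^n = {‖y‖_∞ = 1} in ℝ^{n+1}) are at angular distance at least η/(2√(n+1)). -/

import Mathlib

open scoped RealInnerProductSpace

lemma aux_sqrt_le_arccos (t : ℝ) (h1 : -1 ≤ t) (h2 : t ≤ 1) :
    Real.sqrt (2 - 2 * t) ≤ Real.arccos t := by
  set θ := Real.arccos t with hθ
  have hθ0 : 0 ≤ θ := Real.arccos_nonneg t
  have hθπ : θ ≤ Real.pi := Real.arccos_le_pi t
  have hc : Real.cos θ = t := Real.cos_arccos h1 h2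
  have hs : Real.sin (θ / 2) ^ 2 = 1 / 2 - t / 2 := by
    have := Real.sin_sq_eq_half_sub (θ / 2)
    rwa [show 2 * (θ / 2) = θ by ring, hc] at this
  have hsn : 0 ≤ Real.sin (θ / 2) :=
    Real.sin_nonneg_of_nonneg_of_le_pi (by linarith) (by linarith)
  have heq : Real.sqrt (2 - 2 * t) = 2 * Real.sin (θ / 2) := by
    rw [show (2 - 2 * t : ℝ) = (2 * Real.sin (θ / 2)) ^ 2 by rw [mul_pow, hs]; ring]
    exact Real.sqrt_sq (by positivity)
  have hle := Real.sin_le (x := θ / 2) (by linarith)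
  rw [heq]; linarith

lemma aux_coord_le_norm {n : ℕ} (x : EuclideanSpace ℝ (Fin n)) (j : Fin n) :
    |x j| ≤ ‖x‖ := by
  rw [EuclideanSpace.norm_eq, ← Real.sqrt_sq_eq_abs]
  apply Real.sqrt_le_sqrt
  have : |x j| ^ 2 ≤ ∑ i, ‖x i‖ ^ 2 := by
    simpa [Real.norm_eq_abs] using
      Finset.single_le_sum (f := fun i => |x i| ^ 2)
        (fun i _ => sq_nonneg _) (Finset.mem_univ j)
  simpa [sq_abs] using this

lemma aux_norm_le {n : ℕ} (x : EuclideanSpace ℝ (Fin (n + 1)))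
    (h : ∀ i, |x i| ≤ 1) : ‖x‖ ≤ Real.sqrt (n + 1) := by
  rw [EuclideanSpace.norm_eq]
  apply Real.sqrt_le_sqrt
  calc ∑ i, ‖x i‖ ^ 2 ≤ ∑ _i : Fin (n + 1), (1 : ℝ) := by
        apply Finset.sum_le_sum
        intro i _
        have := h i
        have : ‖x i‖ ≤ 1 := by simpa [Real.norm_eq_abs] using this
        nlinarith [norm_nonneg (x i)]
    _ = (n + 1 : ℝ) := by simp

lemma aux_chord (n k : ℕ) (η : ℝ) (hη : η = (2 : ℝ) ^ (-(k : ℤ)))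
    (y₁ y₂ : EuclideanSpace ℝ (Fin (n + 1)))
    (hy₁ : (∀ i, ∃ m : ℤ, |m| ≤ 2 ^ k ∧ y₁ i = m * η) ∧ ∃ i, |y₁ i| = 1)
    (hy₂ : (∀ i, ∃ m : ℤ, |m| ≤ 2 ^ k ∧ y₂ i = m * η) ∧ ∃ i, |y₂ i| = 1)
    (hne : y₁ ≠ y₂) (hrs : ‖y₁‖ ≤ ‖y₂‖) :
    η / (2 * Real.sqrt (n + 1 : ℝ)) ≤ ‖‖y₁‖⁻¹ • y₁ - ‖y₂‖⁻¹ • y₂‖ := by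
  have hηpos : 0 < η := by rw [hη]; positivity
  have hpow : (2 : ℝ) ^ (k : ℕ) * η = 1 := by
    rw [hη, ← zpow_natCast (2 : ℝ) k, ← zpow_add₀ (two_ne_zero), add_neg_cancel, zpow_zero]
  -- coordinates bounded by 1
  have hbd : ∀ (y : EuclideanSpace ℝ (Fin (n + 1))),
      (∀ i, ∃ m : ℤ, |m| ≤ 2 ^ k ∧ y i = m * η) → ∀ i, |y i| ≤ 1 := by
    intro y hy i
    obtain ⟨m, hm, hmy⟩ := hy i
    have : ((|m| : ℤ) : ℝ) ≤ (2 : ℝ) ^ (k : ℕ) := by exact_mod_cast hm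
    rw [hmy, abs_mul, abs_of_pos hηpos, Int.cast_abs] at *
    nlinarith
  have hb1 := hbd y₁ hy₁.1
  have hb2 := hbd y₂ hy₂.1
  set r := ‖y₁‖ with hr
  set s := ‖y₂‖ with hs
  have hr1 : 1 ≤ r := by
    obtain ⟨i, hi⟩ := hy₁.2
    calc (1 : ℝ) = |y₁ i| := hi.symm
      _ ≤ r := aux_coord_le_norm y₁ i
  have hs1 : 1 ≤ s := by
    obtain ⟨i, hi⟩ := hy₂.2
    calc (1 : ℝ) = |y₂ i| := hi.symm
      _ ≤ s := aux_coord_le_norm y₂ i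
  have hrpos : 0 < r := by linarith
  have hspos : 0 < s := by linarith
  have hrN : r ≤ Real.sqrt (n + 1) := aux_norm_le y₁ hb1
  set c : EuclideanSpace ℝ (Fin (n + 1)) := (r / s) • y₂ with hc
  have hkey : ∃ j, η / 2 ≤ |y₁ j - c j| := by
    by_cases h : η / 2 ≤ 1 - r / s
    · obtain ⟨i, hi⟩ := hy₁.2
      refine ⟨i, ?_⟩
      have hci : |c i| ≤ r / s := by
        have : c i = (r / s) * y₂ i := rfl
        rw [this, abs_mul, abs_of_pos (by positivity)]
        nlinarith [hb2 i, abs_nonneg (y₂ i), div_pos hrpos hspos]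
      have := abs_sub_abs_le_abs_sub (y₁ i) (c i)
      rw [hi] at this
      linarith [abs_sub_comm (y₁ i) (c i)]
    · push_neg at h
      obtain ⟨j, hj⟩ : ∃ j, y₁ j ≠ y₂ j := by
        by_contra hcon; push_neg at hcon; exact hne (PiLp.ext hcon)
      refine ⟨j, ?_⟩
      obtain ⟨m₁, hm₁, he₁⟩ := hy₁.1 j
      obtain ⟨m₂, hm₂, he₂⟩ := hy₂.1 j
      have hmne : m₁ ≠ m₂ := by
        intro hmm; apply hj; rw [he₁, he₂, hmm]
      have hdiff : η ≤ |y₁ j - y₂ j| := by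
        rw [he₁, he₂, show (m₁ : ℝ) * η - m₂ * η = ((m₁ - m₂ : ℤ) : ℝ) * η by push_cast; ring,
          abs_mul, abs_of_pos hηpos]
        have : (1 : ℤ) ≤ |m₁ - m₂| := Int.one_le_abs (sub_ne_zero.mpr hmne)
        have : (1 : ℝ) ≤ |((m₁ - m₂ : ℤ) : ℝ)| := by rw [← Int.cast_abs]; exact_mod_cast this
        nlinarith
      have hc2 : |y₂ j - c j| ≤ 1 - r / s := by
        have : y₂ j - c j = (1 - r / s) * y₂ j := by
          have : c j = (r / s) * y₂ j := rfl
          rw [this]; ring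
        rw [this, abs_mul, abs_of_nonneg (by
          have : r / s ≤ 1 := (div_le_one hspos).mpr hrs
          linarith)]
        nlinarith [hb2 j, abs_nonneg (y₂ j), (div_le_one hspos).mpr hrs]
      have := abs_sub_abs_le_abs_sub (y₁ j - y₂ j) (y₁ j - c j)
      have htri : |y₁ j - y₂ j| - |y₂ j - c j| ≤ |y₁ j - c j| := by
        have h3 : |y₁ j - y₂ j| ≤ |y₁ j - c j| + |c j - y₂ j| := abs_sub_le _ _ _
        have h4 : |c j - y₂ j| = |y₂ j - c j| := abs_sub_comm _ _
        linarith
      linarith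
  obtain ⟨j, hj⟩ := hkey
  have hnc : η / 2 ≤ ‖y₁ - c‖ := by
    have : (y₁ - c) j = y₁ j - c j := rfl
    calc η / 2 ≤ |(y₁ - c) j| := by rw [this]; exact hj
      _ ≤ ‖y₁ - c‖ := aux_coord_le_norm _ j
  have hab : r⁻¹ • y₁ - s⁻¹ • y₂ = r⁻¹ • (y₁ - c) := by
    rw [smul_sub, hc, smul_smul]
    congr 2
    field_simp
  rw [hab, norm_smul, Real.norm_eq_abs, abs_of_pos (by positivity)]
  have hsq : 0 < Real.sqrt (n + 1 : ℝ) := by positivity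
  rw [div_le_iff₀ (by positivity)]
  have h1 : η / 2 ≤ r⁻¹ * ‖y₁ - c‖ * r := by
    rw [mul_comm _ r, ← mul_assoc, mul_inv_cancel₀ (ne_of_gt hrpos), one_mul]
    exact hnc
  have h2 : r⁻¹ * ‖y₁ - c‖ * r ≤ r⁻¹ * ‖y₁ - c‖ * Real.sqrt (n + 1 : ℝ) := by
    apply mul_le_mul_of_nonneg_left hrN
    positivity
  calc η = (η / 2) * 2 := by ring
    _ ≤ (r⁻¹ * ‖y₁ - c‖ * Real.sqrt (n + 1 : ℝ)) * 2 := by nlinarith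
    _ = r⁻¹ * ‖y₁ - c‖ * (2 * Real.sqrt (n + 1 : ℝ)) := by ring

theorem stmt_10 (n k : ℕ) (hk : 1 ≤ k) (η : ℝ) (hη : η = (2 : ℝ) ^ (-(k : ℤ)))
    (y₁ y₂ : EuclideanSpace ℝ (Fin (n + 1)))
    (hy₁ : (∀ i, ∃ m : ℤ, |m| ≤ 2 ^ k ∧ y₁ i = m * η) ∧ ∃ i, |y₁ i| = 1)
    (hy₂ : (∀ i, ∃ m : ℤ, |m| ≤ 2 ^ k ∧ y₂ i = m * η) ∧ ∃ i, |y₂ i| = 1)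
    (hne : ‖y₁‖⁻¹ • y₁ ≠ ‖y₂‖⁻¹ • y₂) :
    η / (2 * Real.sqrt (n + 1 : ℝ)) ≤
      Real.arccos ⟪‖y₁‖⁻¹ • y₁, ‖y₂‖⁻¹ • y₂⟫ := by
  have hyne : y₁ ≠ y₂ := by
    intro h; apply hne; rw [h]
  have hchord : η / (2 * Real.sqrt (n + 1 : ℝ)) ≤ ‖‖y₁‖⁻¹ • y₁ - ‖y₂‖⁻¹ • y₂‖ := by
    rcases le_total ‖y₁‖ ‖y₂‖ with h | h
    · exact aux_chord n k η hη y₁ y₂ hy₁ hy₂ hyne h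
    · rw [norm_sub_rev]
      exact aux_chord n k η hη y₂ y₁ hy₂ hy₁ hyne.symm h
  set a := ‖y₁‖⁻¹ • y₁ with ha
  set b := ‖y₂‖⁻¹ • y₂ with hb
  have hr1 : 1 ≤ ‖y₁‖ := by
    obtain ⟨i, hi⟩ := hy₁.2
    calc (1 : ℝ) = |y₁ i| := hi.symm
      _ ≤ ‖y₁‖ := aux_coord_le_norm y₁ i
  have hs1 : 1 ≤ ‖y₂‖ := by
    obtain ⟨i, hi⟩ := hy₂.2
    calc (1 : ℝ) = |y₂ i| := hi.symm
      _ ≤ ‖y₂‖ := aux_coord_le_norm y₂ i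
  have hna : ‖a‖ = 1 := by
    rw [ha, norm_smul, Real.norm_eq_abs, abs_of_pos (by positivity),
      inv_mul_cancel₀ (by positivity)]
  have hnb : ‖b‖ = 1 := by
    rw [hb, norm_smul, Real.norm_eq_abs, abs_of_pos (by positivity),
      inv_mul_cancel₀ (by positivity)]
  have habs : |⟪a, b⟫| ≤ 1 := by
    have := abs_real_inner_le_norm a b
    rwa [hna, hnb, one_mul] at this
  rw [abs_le] at habs
  have hnorm : ‖a - b‖ ^ 2 = 2 - 2 * ⟪a, b⟫ := by
    rw [norm_sub_sq_real, hna, hnb]; ring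
  have hsqrt : Real.sqrt (2 - 2 * ⟪a, b⟫) = ‖a - b‖ := by
    rw [← hnorm, Real.sqrt_sq (norm_nonneg _)]
  calc η / (2 * Real.sqrt (n + 1 : ℝ)) ≤ ‖a - b‖ := hchord
    _ = Real.sqrt (2 - 2 * ⟪a, b⟫) := hsqrt.symm
    _ ≤ Real.arccos ⟪a, b⟫ := aux_sqrt_le_arccos _ habs.1 habs.2
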